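/- Let Ĝ be a group with a surjective homomorphism π: Ĝ → {±1} and kernel G, let λ̂ be a normalized π-twisted 2-cocycle on Ĝ valued in ℂˣ, and let λ be its restriction to G. Let (V, φ) be a λ-twisted representation of G and ς ∈ Ĝ∖G odd. For g ∈ G define F^ς_g := λ̂(g, ς) · ((φ(g))⁻¹)^∨: V^∨ → V^∨. Then: (a) F^ς_g is a morphism of λ-twisted representations from (V^∨, φ^ς) to (V^∨, φ^{gς}) (note gς is again odd), i.e. F^ς_g ∘ φ^ς(h) = φ^{gς}(h) ∘ F^ς_g for all h ∈ G; and (b) for all g₁, g₂ ∈ G one has F^{g₁ς}_{g₂} ∘ F^ς_{g₁} = F^ς_{g₂g₁}. (This is the statement of Section 4.5 of the paper that the F^ς_g define a G-torsor of duality structures on Rep^λ(G).) -/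

import Mathlib

/-- Conjugation `g ↦ ς g ς⁻¹` preserves the kernel of `π`. -/
def kconj {Ghat : Type*} [Group Ghat] (π : Ghat →* ℤˣ) (ς : Ghat) (g : π.ker) :
    π.ker :=
  ⟨ς * (g : Ghat) * ς⁻¹, by
    have hg : π (g : Ghat) = 1 := MonoidHom.mem_ker.mp g.2
    rw [MonoidHom.mem_ker, map_mul, map_mul, map_inv, hg, mul_one, mul_inv_cancel]⟩

/-- The reflection-twisted transgression `τ^ref_π(λ̂)([ω]g)` of the paper:
`τ_ω(g) = λ̂(g⁻¹,g)⁻¹ · λ̂(ωg⁻¹ω⁻¹, ω) · λ̂(ω, g⁻¹)⁻¹`. -/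
def tau {Ghat : Type*} [Group Ghat] (lam : Ghat → Ghat → ℂˣ) (ω g : Ghat) : ℂˣ :=
  (lam g⁻¹ g)⁻¹ * lam (ω * g⁻¹ * ω⁻¹) ω * (lam ω g⁻¹)⁻¹

/-- The dualization construction of Section 4.5 of the paper:
`φ^ω(g) := τ_ω(g)⁻¹ · (φ(ω g⁻¹ ω⁻¹))^∨` on the dual space. -/
noncomputable def dualTw {Ghat : Type*} [Group Ghat] (π : Ghat →* ℤˣ)
    (lam : Ghat → Ghat → ℂˣ) (ω : Ghat) {V : Type*} [AddCommGroup V] [Module ℂ V]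
    (φ : π.ker → (V →ₗ[ℂ] V)) (g : π.ker) :
    Module.Dual ℂ V →ₗ[ℂ] Module.Dual ℂ V :=
  (((tau lam ω (g : Ghat))⁻¹ : ℂˣ) : ℂ) • LinearMap.dualMap (φ (kconj π ω g⁻¹))

/-- The non-singular form functor `F^ς_g := λ̂(g,ς)·((φ(g))⁻¹)^∨` of Section 4.5 of
the paper. -/
noncomputable def Fmap {Ghat : Type*} [Group Ghat] (π : Ghat →* ℤˣ)
    (lam : Ghat → Ghat → ℂˣ) {V : Type*} [AddCommGroup V] [Module ℂ V]
    (φ : π.ker → (V ≃ₗ[ℂ] V)) (ς : Ghat) (g : π.ker) :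
    Module.Dual ℂ V →ₗ[ℂ] Module.Dual ℂ V :=
  ((lam (g : Ghat) ς : ℂˣ) : ℂ) • LinearMap.dualMap (φ g).symm.toLinearMap

private lemma dualMap_smul' {V : Type*} [AddCommGroup V] [Module ℂ V] (c : ℂ)
    (f : V →ₗ[ℂ] V) : (c • f).dualMap = c • f.dualMap := by
  ext φ x
  simp

/-- abstract scalar identity used for part (a) -/
private lemma scalar_key (p1 p2 p3 p4 p5 p6 p7 p8 p9 p10 p11 p12 : ℂ)
    (n1 : p1 ≠ 0) (n2 : p2 ≠ 0) (n4 : p4 ≠ 0) (n5 : p5 ≠ 0) (n6 : p6 ≠ 0)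
    (n10 : p10 ≠ 0) (n11 : p11 ≠ 0)
    (H1 : p1 * p2 = p3 * p4) (H2 : p5 * p6 = p3 * p7) (H3 : p8 * p2 = p9 * p5)
    (H4 : p10 * p4 = p7 * p11) :
    (p12⁻¹ * p1 * p8⁻¹)⁻¹ * (p5 * p10⁻¹) = p5 * ((p12⁻¹ * p6 * p9⁻¹)⁻¹ * p11⁻¹) := by
  have key : p6 * p8 * p11 * (p2 * p4 * p5) = p1 * p9 * p10 * (p2 * p4 * p5) := by
    linear_combination p2 * p4 * p8 * p11 * H2 + p3 * p4 * p7 * p11 * H3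
      - p5 * p9 * p7 * p11 * H1 - p5 * p9 * p1 * p2 * H4
  have key2 : p6 * p8 * p11 = p1 * p9 * p10 :=
    mul_right_cancel₀ (by simp [n2, n4, n5]) key
  field_simp
  linear_combination p12 * key2

/-- The statement of Section 4.5 of the paper that the maps `F^ς_g` define a `G`-torsor
of duality structures on `Rep^λ(G)`: (a) `F^ς_g` is a morphism of `λ`-twisted
representations `(V^∨, φ^ς) → (V^∨, φ^{gς})`, and (b) `F^{g₁ς}_{g₂} ∘ F^ς_{g₁} = F^ς_{g₂g₁}`. -/
theorem torsor_of_duality_structures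
    {Ghat : Type*} [Group Ghat] (π : Ghat →* ℤˣ) (hπ : Function.Surjective π)
    (lam : Ghat → Ghat → ℂˣ) (hnorm : lam 1 1 = 1)
    (hcoc : ∀ ω₁ ω₂ ω₃ : Ghat,
      lam ω₂ ω₃ ^ ((π ω₁ : ℤˣ) : ℤ) * lam ω₁ (ω₂ * ω₃) = lam (ω₁ * ω₂) ω₃ * lam ω₁ ω₂)
    {V : Type*} [AddCommGroup V] [Module ℂ V] [FiniteDimensional ℂ V]
    (φ : π.ker → (V ≃ₗ[ℂ] V))
    (hφ : ∀ g h : π.ker, (φ g).toLinearMap ∘ₗ (φ h).toLinearMap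
      = ((lam (g : Ghat) (h : Ghat) : ℂˣ) : ℂ) • (φ (g * h)).toLinearMap)
    (ς : Ghat) (hς : π ς = -1) :
    (∀ (g : π.ker) (h : π.ker),
        Fmap π lam φ ς g ∘ₗ dualTw π lam ς (fun k => (φ k).toLinearMap) h
          = dualTw π lam ((g : Ghat) * ς) (fun k => (φ k).toLinearMap) h ∘ₗ
              Fmap π lam φ ς g) ∧
      (∀ g₁ g₂ : π.ker,
        Fmap π lam φ ((g₁ : Ghat) * ς) g₂ ∘ₗ Fmap π lam φ ς g₁
          = Fmap π lam φ ς (g₂ * g₁)) := by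
  -- cocycle identity with even first argument
  have heven : ∀ (g : π.ker) (ω₂ ω₃ : Ghat),
      lam ω₂ ω₃ * lam (g : Ghat) (ω₂ * ω₃)
        = lam ((g : Ghat) * ω₂) ω₃ * lam (g : Ghat) ω₂ := by
    intro g ω₂ ω₃
    have h := hcoc (g : Ghat) ω₂ ω₃
    rw [MonoidHom.mem_ker.mp g.2] at h
    simpa using h
  -- composition of a φ with an inverse φ
  have comp_symm : ∀ g k : π.ker, (φ k).toLinearMap ∘ₗ (φ g).symm.toLinearMap
      = (((lam (↑(k * g⁻¹)) (g : Ghat))⁻¹ : ℂˣ) : ℂ) • (φ (k * g⁻¹)).toLinearMap := by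
    intro g k
    have h := hφ (k * g⁻¹) g
    rw [inv_mul_cancel_right] at h
    ext x
    have hx := LinearMap.ext_iff.mp h ((φ g).symm x)
    simp only [LinearMap.coe_comp, Function.comp_apply, LinearEquiv.coe_coe,
      LinearEquiv.apply_symm_apply, LinearMap.smul_apply] at hx
    simp only [LinearMap.coe_comp, Function.comp_apply, LinearEquiv.coe_coe,
      LinearMap.smul_apply]
    rw [hx, Units.val_inv_eq_inv_val, smul_smul, inv_mul_cancel₀ (Units.ne_zero _),
      one_smul]
  have symm_comp : ∀ g k : π.ker, (φ g).symm.toLinearMap ∘ₗ (φ k).toLinearMap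
      = (((lam (g : Ghat) (↑(g⁻¹ * k)))⁻¹ : ℂˣ) : ℂ) • (φ (g⁻¹ * k)).toLinearMap := by
    intro g k
    have h := hφ g (g⁻¹ * k)
    rw [mul_inv_cancel_left] at h
    ext x
    have hx := LinearMap.ext_iff.mp h x
    simp only [LinearMap.coe_comp, Function.comp_apply, LinearEquiv.coe_coe,
      LinearMap.smul_apply] at hx
    simp only [LinearMap.coe_comp, Function.comp_apply, LinearEquiv.coe_coe,
      LinearMap.smul_apply]
    have hx2 : (φ (g⁻¹ * k)) x = ((lam (g : Ghat) (↑(g⁻¹ * k)) : ℂˣ) : ℂ) • (φ g).symm ((φ k) x) := by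
      rw [← (φ g).symm_apply_apply ((φ (g⁻¹ * k)) x), hx, map_smul]
    rw [hx2, Units.val_inv_eq_inv_val, smul_smul, inv_mul_cancel₀ (Units.ne_zero _),
      one_smul]
  constructor
  · intro g h
    have hKA : kconj π ((g : Ghat) * ς) h⁻¹ = g * kconj π ς h⁻¹ * g⁻¹ := by
      apply Subtype.ext
      simp only [kconj, Subgroup.coe_mul, InvMemClass.coe_inv, MulMemClass.mk_mul_mk]
      group
    have harg : g⁻¹ * (g * kconj π ς h⁻¹ * g⁻¹) = kconj π ς h⁻¹ * g⁻¹ := by group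
    simp only [Fmap, dualTw, hKA]
    simp only [LinearMap.smul_comp, LinearMap.comp_smul, LinearMap.dualMap_comp_dualMap]
    rw [comp_symm g (kconj π ς h⁻¹), symm_comp g (g * kconj π ς h⁻¹ * g⁻¹), harg]
    simp only [dualMap_smul', smul_smul]
    congr 1
    have c1 : ((kconj π ς h⁻¹ * g⁻¹ : π.ker) : Ghat)
        = (ς * (↑h)⁻¹ * ς⁻¹) * (↑g : Ghat)⁻¹ := by
      simp [kconj]
    have c2 : ((↑g : Ghat) * ς) * (↑h)⁻¹ * ((↑g : Ghat) * ς)⁻¹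
        = (↑g : Ghat) * (ς * (↑h)⁻¹ * ς⁻¹) * (↑g : Ghat)⁻¹ := by group
    have cK : ((g * kconj π ς h⁻¹ * g⁻¹ : π.ker) : Ghat)
        = (↑g : Ghat) * (ς * (↑h)⁻¹ * ς⁻¹) * (↑g : Ghat)⁻¹ := by
      simp [kconj, mul_assoc]
    simp only [tau, c1]
    rw [c2]
    -- cocycle instances
    have E1 := heven g (ς * (↑h)⁻¹ * ς⁻¹) ς
    have E2 := heven (g * kconj π ς h⁻¹ * g⁻¹) (↑g : Ghat) ς
    rw [cK, show ((↑g : Ghat) * (ς * (↑h)⁻¹ * ς⁻¹) * (↑g : Ghat)⁻¹) * (↑g : Ghat)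
        = (↑g : Ghat) * (ς * (↑h)⁻¹ * ς⁻¹) from by group] at E2
    have E3 := heven g ς (↑h)⁻¹
    rw [show ς * (↑h : Ghat)⁻¹ = (ς * (↑h)⁻¹ * ς⁻¹) * ς from by group] at E3
    have E4 := heven g ((ς * (↑h)⁻¹ * ς⁻¹) * (↑g : Ghat)⁻¹) (↑g : Ghat)
    rw [show ((ς * (↑h)⁻¹ * ς⁻¹) * (↑g : Ghat)⁻¹) * (↑g : Ghat)
        = ς * (↑h)⁻¹ * ς⁻¹ from by group,
      show (↑g : Ghat) * ((ς * (↑h)⁻¹ * ς⁻¹) * (↑g : Ghat)⁻¹)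
        = (↑g : Ghat) * (ς * (↑h)⁻¹ * ς⁻¹) * (↑g : Ghat)⁻¹ from by group] at E4
    have e1 := congrArg Units.val E1
    have e2 := congrArg Units.val E2
    have e3 := congrArg Units.val E3
    have e4 := congrArg Units.val E4
    simp only [Units.val_mul] at e1 e2 e3 e4
    simp only [Units.val_mul, Units.val_inv_eq_inv_val]
    exact scalar_key _ _ _ _ _ _ _ _ _ _ _ _ (Units.ne_zero _) (Units.ne_zero _)
      (Units.ne_zero _) (Units.ne_zero _) (Units.ne_zero _) (Units.ne_zero _)
      (Units.ne_zero _) e1 e2 e3 e4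
  · intro g₁ g₂
    have E := heven g₂ (g₁ : Ghat) ς
    simp only [Fmap, Subgroup.coe_mul]
    rw [LinearMap.smul_comp, LinearMap.comp_smul, LinearMap.dualMap_comp_dualMap]
    have hsc : (φ g₁).symm.toLinearMap ∘ₗ (φ g₂).symm.toLinearMap
        = (((lam (g₂ : Ghat) (g₁ : Ghat))⁻¹ : ℂˣ) : ℂ) • (φ (g₂ * g₁)).symm.toLinearMap := by
      ext x
      have hx := LinearMap.ext_iff.mp (hφ g₂ g₁) ((φ (g₂ * g₁)).symm x)
      simp only [LinearMap.coe_comp, Function.comp_apply, LinearEquiv.coe_coe,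
        LinearMap.smul_apply, LinearEquiv.apply_symm_apply] at hx
      have hy : (φ (g₂ * g₁)).symm x
          = ((lam (g₂ : Ghat) (g₁ : Ghat) : ℂˣ) : ℂ) • (φ g₁).symm ((φ g₂).symm x) := by
        calc (φ (g₂ * g₁)).symm x
            = (φ g₁).symm ((φ g₂).symm ((φ g₂) ((φ g₁) ((φ (g₂ * g₁)).symm x)))) := by
              rw [LinearEquiv.symm_apply_apply, LinearEquiv.symm_apply_apply]
          _ = (φ g₁).symm ((φ g₂).symm (((lam (g₂ : Ghat) (g₁ : Ghat) : ℂˣ) : ℂ) • x)) := by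
              rw [hx]
          _ = _ := by rw [map_smul, map_smul]
      simp only [LinearMap.coe_comp, Function.comp_apply, LinearEquiv.coe_coe,
        LinearMap.smul_apply]
      rw [hy, Units.val_inv_eq_inv_val, smul_smul, inv_mul_cancel₀ (Units.ne_zero _),
        one_smul]
    rw [hsc, dualMap_smul', smul_smul, smul_smul]
    congr 1
    have e := congrArg (Units.val) E
    simp only [Units.val_mul] at e
    rw [Units.val_inv_eq_inv_val]
    field_simp
    linear_combination e
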